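/- Let γ > 0, β > 0 and ε ∈ ℝ with γβ < ε², and set s = √(ε² − γβ), E₁* = ½√(γ/β)·s, E₂* = ½√(β/γ)·s. If ε < 0, set ψ* = −arcsin(√(γβ)/ε); if ε > 0, set ψ* = −π + arcsin(√(γβ)/ε). Then (E₁*, E₂*, ψ*) is a fixed point of the two-site energy-phase system: 2ε√(E₁*E₂*) sin ψ* + 2βE₁* = 0, −2ε√(E₁*E₂*) sin ψ* − 2γE₂* = 0, and 2(E₂* − E₁*)(1 + ε cos ψ*/(2√(E₁*E₂*))) = 0. -/

import Mathlib

set_option maxHeartbeats 1000000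


/-- The two-site damped and driven breather is a fixed point of the two-site
energy-phase system. -/
theorem stmt_12 (ε γ β : ℝ) (hγ : 0 < γ) (hβ : 0 < β) (h : γ * β < ε ^ 2)
    (E1 E2 ψ : ℝ)
    (hE1 : E1 = (1 / 2) * Real.sqrt (γ / β) * Real.sqrt (ε ^ 2 - γ * β))
    (hE2 : E2 = (1 / 2) * Real.sqrt (β / γ) * Real.sqrt (ε ^ 2 - γ * β))
    (hψneg : ε < 0 → ψ = -Real.arcsin (Real.sqrt (γ * β) / ε))
    (hψpos : 0 < ε → ψ = -Real.pi + Real.arcsin (Real.sqrt (γ * β) / ε)) :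
    2 * ε * Real.sqrt (E1 * E2) * Real.sin ψ + 2 * β * E1 = 0 ∧
    -(2 * ε * Real.sqrt (E1 * E2) * Real.sin ψ) - 2 * γ * E2 = 0 ∧
    2 * (E2 - E1) * (1 + ε * Real.cos ψ / (2 * Real.sqrt (E1 * E2))) = 0 := by
  set s := Real.sqrt (ε ^ 2 - γ * β) with hsdef
  have hdpos : 0 < ε ^ 2 - γ * β := by nlinarith
  have hspos : 0 < s := Real.sqrt_pos.mpr hdpos
  have hs2 : s ^ 2 = ε ^ 2 - γ * β := Real.sq_sqrt hdpos.le
  have hεne : ε ≠ 0 := by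
    intro h0; rw [h0] at h; nlinarith [mul_pos hγ hβ]
  set a := Real.sqrt γ with hadef
  set b := Real.sqrt β with hbdef
  have ha : a ^ 2 = γ := Real.sq_sqrt hγ.le
  have hb : b ^ 2 = β := Real.sq_sqrt hβ.le
  have hapos : 0 < a := Real.sqrt_pos.mpr hγ
  have hbpos : 0 < b := Real.sqrt_pos.mpr hβ
  have hab : Real.sqrt (γ * β) = a * b := Real.sqrt_mul hγ.le β
  have hd1 : Real.sqrt (γ / β) = a / b := Real.sqrt_div hγ.le β
  have hd2 : Real.sqrt (β / γ) = b / a := Real.sqrt_div hβ.le γ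
  have habpos : 0 < a * b := mul_pos hapos hbpos
  -- sqrt(E1 E2) = s / 2
  have hE12 : E1 * E2 = (s / 2) ^ 2 := by
    rw [hE1, hE2, hd1, hd2]; field_simp
  have hsE : Real.sqrt (E1 * E2) = s / 2 := by
    rw [hE12, Real.sqrt_sq (by positivity)]
  -- sin ψ = -(a*b)/ε
  have habs : a * b < |ε| := by
    have h1 : (a * b) ^ 2 < |ε| ^ 2 := by
      rw [sq_abs]; nlinarith
    nlinarith [abs_nonneg ε, habpos]
  have hx1 : -1 ≤ Real.sqrt (γ * β) / ε := by
    rw [hab]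
    rcases lt_or_gt_of_ne hεne with hneg | hpos
    · rw [le_div_iff_of_neg hneg]
      have h1 : |ε| = -ε := abs_of_neg hneg
      nlinarith
    · have h1 : 0 < a * b / ε := div_pos habpos hpos
      linarith
  have hx2 : Real.sqrt (γ * β) / ε ≤ 1 := by
    rw [hab]
    rcases lt_or_gt_of_ne hεne with hneg | hpos
    · have h1 : a * b / ε < 0 := div_neg_of_pos_of_neg habpos hneg
      linarith
    · rw [div_le_iff₀ hpos]
      have h1 : |ε| = ε := abs_of_pos hpos
      nlinarith
  have hsin : Real.sin ψ = -(a * b) / ε := by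
    rcases lt_or_gt_of_ne hεne with hneg | hpos
    · rw [hψneg hneg, Real.sin_neg, Real.sin_arcsin hx1 hx2, hab]; ring
    · rw [hψpos hpos]
      rw [show -Real.pi + Real.arcsin (Real.sqrt (γ * β) / ε)
          = Real.arcsin (Real.sqrt (γ * β) / ε) - Real.pi by ring]
      rw [Real.sin_sub, Real.sin_pi, Real.cos_pi, Real.sin_arcsin hx1 hx2, hab]
      ring
  -- ε * cos ψ = -s
  have hone : 1 - (Real.sqrt (γ * β) / ε) ^ 2 = (ε ^ 2 - γ * β) / ε ^ 2 := by
    rw [div_pow, Real.sq_sqrt (mul_pos hγ hβ).le]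
    field_simp
  have hsqd : Real.sqrt ((ε ^ 2 - γ * β) / ε ^ 2) = s / |ε| := by
    rw [Real.sqrt_div hdpos.le, Real.sqrt_sq_eq_abs]
  have hcos : ε * Real.cos ψ = -s := by
    rcases lt_or_gt_of_ne hεne with hneg | hpos
    · rw [hψneg hneg, Real.cos_neg, Real.cos_arcsin, hone, hsqd,
        abs_of_neg hneg]
      field_simp
    · rw [hψpos hpos]
      rw [show -Real.pi + Real.arcsin (Real.sqrt (γ * β) / ε)
          = Real.arcsin (Real.sqrt (γ * β) / ε) - Real.pi by ring]
      rw [Real.cos_sub, Real.sin_pi, Real.cos_pi, Real.cos_arcsin, hone, hsqd,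
        abs_of_pos hpos]
      field_simp
      ring
  refine ⟨?_, ?_, ?_⟩
  · rw [hsE, hsin, hE1, hd1, ← hb]
    field_simp
    ring
  · rw [hsE, hsin, hE2, hd2, ← ha]
    field_simp
    ring
  · have : 1 + ε * Real.cos ψ / (2 * Real.sqrt (E1 * E2)) = 0 := by
      rw [hsE, hcos]
      field_simp
      norm_num
    rw [this]; ring
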